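/- Let f : ℝ^n → ℝ be convex and continuously differentiable with a global minimizer x*. Let sequences (x^k), (y^k), (u^k) in ℝ^n, positive reals (L_k) and reals (a_k), (A_k) satisfy: A_0 = 0, u^0 = y^0, and for every k ≥ 0: a_{k+1} = (1/L_k + sqrt(1/L_k^2 + 4 A_k/L_k))/2, A_{k+1} = A_k + a_{k+1}, x^k = (A_k/A_{k+1}) y^k + (a_{k+1}/A_{k+1}) u^k, ∥∇f(y^{k+1}) + L_k (y^{k+1} − x^k)∥ ≤ (L_k/2) ∥y^{k+1} − x^k∥, and u^{k+1} = u^k − a_{k+1} ∇f(y^{k+1}). Set R = ∥y^0 − x*∥. Then for all N ≥ 1: (i) (1/2)∥u^N − x*∥^2 + A_N (f(y^N) − f(x*)) + (1/4) Σ_{k=1}^N A_k L_{k−1} ∥y^k − x^{k−1}∥^2 ≤ R^2/2; (ii) f(y^N) − f(x*) ≤ R^2/(2 A_N) and ∥u^N − x*∥ ≤ R; (iii) Σ_{k=1}^N A_k L_{k−1} ∥y^k − x^{k−1}∥^2 ≤ 2 R^2. -/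

import Mathlib

set_option maxHeartbeats 1000000

open Set

lemma grad_ineq_aux {n : ℕ} {f : EuclideanSpace ℝ (Fin n) → ℝ}
    (hconv : ConvexOn ℝ Set.univ f) (hf : ContDiff ℝ 1 f)
    (w z : EuclideanSpace ℝ (Fin n)) :
    f w + @inner ℝ _ _ (gradient f w) (z - w) ≤ f z := by
  have hdiff : DifferentiableAt ℝ f w := (hf.differentiable one_ne_zero).differentiableAt
  have hgrad := hdiff.hasGradientAt
  have hF : HasFDerivAt f (InnerProductSpace.toDual ℝ _ (gradient f w)) w := hgrad
  have hF' : HasFDerivAt f (InnerProductSpace.toDual ℝ _ (gradient f w))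
      (w + (0:ℝ) • (z - w)) := by simpa using hF
  have hline : HasDerivAt (fun t : ℝ => w + t • (z - w)) (z - w) 0 := by
    simpa using ((hasDerivAt_id (0:ℝ)).smul_const (z - w)).const_add w
  have hcomp : HasDerivAt (fun t : ℝ => f (w + t • (z - w)))
      (@inner ℝ _ _ (gradient f w) (z - w)) 0 := by
    have := hF'.comp_hasDerivAt (x := (0:ℝ)) hline
    simpa [InnerProductSpace.toDual_apply_apply, Function.comp_def] using this
  have heq : (f ∘ ⇑(AffineMap.lineMap w z)) = fun t : ℝ => f (w + t • (z - w)) := by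
    funext t
    simp only [Function.comp_apply, AffineMap.lineMap_apply_module]
    congr 1
    module
  have hg : ConvexOn ℝ Set.univ (fun t : ℝ => f (w + t • (z - w))) := by
    have := hconv.comp_affineMap (AffineMap.lineMap w z)
    rw [Set.preimage_univ, heq] at this
    exact this
  have hslope := hg.le_slope_of_hasDerivAt (Set.mem_univ (0:ℝ)) (Set.mem_univ (1:ℝ))
    zero_lt_one hcomp
  rw [slope_def_field] at hslope
  have h1 : w + (1:ℝ) • (z - w) = z := by rw [one_smul]; abel
  have h0 : w + (0:ℝ) • (z - w) = w := by rw [zero_smul, add_zero]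
  have h10 : (1:ℝ) - 0 = 1 := by norm_num
  simp only [h1, h0, h10, div_one] at hslope
  linarith

/-- Theorem 2 (Monteiro–Svaiter): convergence of the accelerated hybrid proximal
extragradient framework (Algorithm 2). With `R = ‖y^0 - x_*‖`, for all `N ≥ 1`:
(i) `(1/2)‖u^N - x_*‖² + A_N (f(y^N) - f(x_*)) + (1/4) ∑_{k=1}^N A_k L_{k-1} ‖y^k - x^{k-1}‖² ≤ R²/2`;
(ii) `f(y^N) - f(x_*) ≤ R²/(2 A_N)` and `‖u^N - x_*‖ ≤ R`;
(iii) `∑_{k=1}^N A_k L_{k-1} ‖y^k - x^{k-1}‖² ≤ 2R²`. -/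
theorem accelerated_hpe_convergence {n : ℕ}
    (f : EuclideanSpace ℝ (Fin n) → ℝ)
    (hconv : ConvexOn ℝ Set.univ f) (hf : ContDiff ℝ 1 f)
    (xstar : EuclideanSpace ℝ (Fin n)) (hmin : ∀ z, f xstar ≤ f z)
    (x y u : ℕ → EuclideanSpace ℝ (Fin n))
    (L a A : ℕ → ℝ) (hL : ∀ k, 0 < L k)
    (hA0 : A 0 = 0) (hu0 : u 0 = y 0)
    (ha : ∀ k, a (k + 1) = (1 / L k + Real.sqrt (1 / (L k) ^ 2 + 4 * A k / L k)) / 2)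
    (hA : ∀ k, A (k + 1) = A k + a (k + 1))
    (hx : ∀ k, x k = (A k / A (k + 1)) • y k + (a (k + 1) / A (k + 1)) • u k)
    (hy : ∀ k, ‖gradient f (y (k + 1)) + L k • (y (k + 1) - x k)‖
        ≤ (L k / 2) * ‖y (k + 1) - x k‖)
    (hu : ∀ k, u (k + 1) = u k - a (k + 1) • gradient f (y (k + 1))) :
    ∀ N : ℕ, 1 ≤ N →
      ((1 / 2) * ‖u N - xstar‖ ^ 2 + A N * (f (y N) - f xstar)
          + (1 / 4) * ∑ k ∈ Finset.Icc 1 N, A k * L (k - 1) * ‖y k - x (k - 1)‖ ^ 2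
        ≤ ‖y 0 - xstar‖ ^ 2 / 2) ∧
      (f (y N) - f xstar ≤ ‖y 0 - xstar‖ ^ 2 / (2 * A N)) ∧
      (‖u N - xstar‖ ≤ ‖y 0 - xstar‖) ∧
      (∑ k ∈ Finset.Icc 1 N, A k * L (k - 1) * ‖y k - x (k - 1)‖ ^ 2
        ≤ 2 * ‖y 0 - xstar‖ ^ 2) := by
  have hAnn : ∀ k, 0 ≤ A k := by
    intro k; induction k with
    | zero => simp [hA0]
    | succ k ih =>
      have hs := Real.sqrt_nonneg (1 / L k ^ 2 + 4 * A k / L k)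
      have hl : 0 < 1 / L k := one_div_pos.mpr (hL k)
      rw [hA k, ha k]; linarith
  have hapos : ∀ k, 0 < a (k + 1) := by
    intro k
    have hs := Real.sqrt_nonneg (1 / L k ^ 2 + 4 * A k / L k)
    have hl : 0 < 1 / L k := one_div_pos.mpr (hL k)
    rw [ha k]; linarith
  have hApos : ∀ k, 0 < A (k + 1) := fun k => by
    have h1 := hAnn k; have h2 := hapos k; rw [hA k]; linarith
  have hAL : ∀ k, L k * a (k + 1) ^ 2 = A (k + 1) := by
    intro k
    have harg : 0 ≤ 1 / L k ^ 2 + 4 * A k / L k := by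
      have h1 := hAnn k; have h2 := hL k; positivity
    have hs : Real.sqrt (1 / L k ^ 2 + 4 * A k / L k) ^ 2
        = 1 / L k ^ 2 + 4 * A k / L k := Real.sq_sqrt harg
    have hLk := (hL k).ne'
    set s := Real.sqrt (1 / L k ^ 2 + 4 * A k / L k) with hsdef
    rw [ha k, hA k, ha k, ← hsdef]
    field_simp at hs ⊢
    linear_combination hs
  have hb : ∀ k, A (k + 1) • x k = A k • y k + a (k + 1) • u k := by
    intro k
    have hne := (hApos k).ne'
    have e1 : A (k + 1) * (A k / A (k + 1)) = A k := by field_simp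
    have e2 : A (k + 1) * (a (k + 1) / A (k + 1)) = a (k + 1) := by field_simp
    rw [hx k, smul_add, smul_smul, smul_smul, e1, e2]
  have hgi : ∀ w z, f w + @inner ℝ _ _ (gradient f w) (z - w) ≤ f z :=
    grad_ineq_aux hconv hf
  have key : ∀ k, (1/2)*‖u (k+1) - xstar‖^2 + A (k+1) * (f (y (k+1)) - f xstar)
      + (A (k+1) * L k / 4) * ‖y (k+1) - x k‖^2
      ≤ (1/2)*‖u k - xstar‖^2 + A k * (f (y k) - f xstar) := by
    intro k
    set g := gradient f (y (k+1)) with hg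
    set aa := a (k+1) with haadef
    set d := y (k+1) - x k with hd
    set v := g + L k • d with hvdef
    have ha' : ‖u (k+1) - xstar‖^2 = ‖u k - xstar‖^2
        - 2*aa*(@inner ℝ _ _ g (u k - xstar)) + aa^2*‖g‖^2 := by
      have hre : u (k+1) - xstar = (u k - xstar) - aa • g := by rw [hu k]; abel
      have h1 : ‖(u k - xstar) - aa • g‖^2 = ‖u k - xstar‖^2
          - 2*(@inner ℝ _ _ (u k - xstar) (aa • g)) + ‖aa • g‖^2 :=
        norm_sub_sq_real _ _
      have h2 : @inner ℝ _ _ (u k - xstar) (aa • g)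
          = aa * @inner ℝ _ _ g (u k - xstar) := by
        rw [real_inner_smul_right, real_inner_comm]
      have h3 : ‖aa • g‖^2 = aa^2 * ‖g‖^2 := by
        rw [norm_smul, mul_pow, Real.norm_eq_abs, sq_abs]
      rw [hre, h1, h2, h3]; ring
    have hbx : A (k+1) * (@inner ℝ _ _ g (x k)) = A k * (@inner ℝ _ _ g (y k))
        + aa * (@inner ℝ _ _ g (u k)) := by
      have h := congrArg (fun p => @inner ℝ _ _ g p) (hb k)
      simpa only [inner_add_right, real_inner_smul_right] using h
    have hinner : A (k+1) * (@inner ℝ _ _ g (x k - y (k+1)))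
          - aa * (@inner ℝ _ _ g (u k - xstar))
        = A k * (@inner ℝ _ _ g (y k - y (k+1)))
          + aa * (@inner ℝ _ _ g (xstar - y (k+1))) := by
      simp only [inner_sub_right]
      linear_combination hbx - (@inner ℝ _ _ g (y (k+1))) * hA k
    have c1 := hgi (y (k+1)) (y k)
    have c2 := hgi (y (k+1)) xstar
    have hAk := hAnn k
    have haan := (hapos k).le
    have hAf : A (k+1) * f (y (k+1)) = A k * f (y (k+1)) + aa * f (y (k+1)) := by
      rw [hA k]; ring
    have hcc : A (k+1) * f (y (k+1)) + A (k+1) * (@inner ℝ _ _ g (x k - y (k+1)))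
        - aa * (@inner ℝ _ _ g (u k - xstar)) ≤ A k * f (y k) + aa * f xstar := by
      have m1 := mul_le_mul_of_nonneg_left c1 hAk
      have m2 := mul_le_mul_of_nonneg_left c2 haan
      nlinarith [m1, m2, hinner, hAf]
    have hgd : g = v - L k • d := by rw [hvdef]; abel
    have hDot : @inner ℝ _ _ g (x k - y (k+1)) = L k * ‖d‖^2 - @inner ℝ _ _ v d := by
      have hx' : x k - y (k+1) = -d := by rw [hd]; abel
      rw [hx', hgd, inner_neg_right, inner_sub_left, real_inner_smul_left,
        real_inner_self_eq_norm_sq]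
      ring
    have hG : ‖g‖^2 = ‖v‖^2 - 2*(L k)*(@inner ℝ _ _ v d) + (L k)^2*‖d‖^2 := by
      rw [hgd, norm_sub_sq_real, real_inner_smul_right, norm_smul,
        Real.norm_eq_abs, mul_pow, sq_abs]
      ring
    have hLk := hL k
    have hvle : ‖v‖ ≤ L k / 2 * ‖d‖ := hy k
    have hvnorm : ‖v‖^2 ≤ (L k)^2/4 * ‖d‖^2 := by
      nlinarith [norm_nonneg v, norm_nonneg d]
    have hbr : (L k/4) * ‖d‖^2 ≤ @inner ℝ _ _ g (x k - y (k+1)) - ‖g‖^2/(2*L k) := by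
      have heq2 : ‖g‖^2/(2*L k) = ‖v‖^2/(2*L k) - @inner ℝ _ _ v d + (L k/2)*‖d‖^2 := by
        rw [hG]; field_simp
      have h2 : ‖v‖^2/(2*L k) ≤ (L k/8)*‖d‖^2 := by
        rw [div_le_iff₀ (by positivity)]; nlinarith [hvnorm]
      rw [hDot, heq2]
      nlinarith
    have hA1 : 0 < A (k+1) := hApos k
    have he : (A (k+1) * L k / 4) * ‖d‖^2
        ≤ A (k+1) * (@inner ℝ _ _ g (x k - y (k+1))) - (aa^2/2) * ‖g‖^2 := by
      have hmul := mul_le_mul_of_nonneg_left hbr hA1.le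
      have hsub : A (k+1) * (‖g‖^2/(2*L k)) = (aa^2/2) * ‖g‖^2 := by
        rw [← hAL k, ← haadef]; field_simp
      nlinarith [hmul, hsub]
    have hAf2 : A (k+1) * f xstar = A k * f xstar + aa * f xstar := by
      rw [hA k]; ring
    nlinarith [ha', hcc, he, hAf2]
  have tele : ∀ M : ℕ, (1/2)*‖u M - xstar‖^2 + A M * (f (y M) - f xstar)
      + (1/4) * ∑ k ∈ Finset.Icc 1 M, A k * L (k-1) * ‖y k - x (k-1)‖^2
      ≤ ‖y 0 - xstar‖^2 / 2 := by
    intro M; induction M with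
    | zero =>
      simp only [hA0, hu0]
      rw [Finset.Icc_eq_empty (by omega), Finset.sum_empty]
      ring_nf
      rfl
    | succ M ih =>
      rw [Finset.sum_Icc_succ_top (Nat.succ_le_succ (Nat.zero_le M))]
      simp only [Nat.add_sub_cancel]
      nlinarith [key M, ih]
  intro N hN
  have hANpos : 0 < A N := by
    cases N with
    | zero => omega
    | succ M => exact hApos M
  have hfge : 0 ≤ f (y N) - f xstar := sub_nonneg.mpr (hmin _)
  have hsum : 0 ≤ ∑ k ∈ Finset.Icc 1 N, A k * L (k-1) * ‖y k - x (k-1)‖^2 :=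
    Finset.sum_nonneg fun k _ => mul_nonneg (mul_nonneg (hAnn k) (hL _).le) (sq_nonneg _)
  have h1 := tele N
  refine ⟨h1, ?_, ?_, ?_⟩
  · rw [le_div_iff₀ (by positivity)]
    nlinarith [sq_nonneg ‖u N - xstar‖]
  · have h2 : ‖u N - xstar‖^2 ≤ ‖y 0 - xstar‖^2 := by
      nlinarith [mul_nonneg (hAnn N) hfge]
    have h3 := Real.sqrt_le_sqrt h2
    rwa [Real.sqrt_sq (norm_nonneg _), Real.sqrt_sq (norm_nonneg _)] at h3
  · nlinarith [sq_nonneg ‖u N - xstar‖, mul_nonneg (hAnn N) hfge]
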